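/- Let s > 2, cosh λ = s/2, and let x : {0,…,ℓ+1} → [0,1) satisfy the cat map recurrence −x_{t+1} + s·x_t − x_{t−1} = m_t on {1,…,ℓ}. Define the approximate state x̄_i = Σ_{j=1}^{ℓ} g_{ij} m_j with g the Dirichlet Green's function. Then for all i ∈ {1,…,ℓ}: |x_i − x̄_i| ≤ cosh((½(ℓ+1) − i)λ)/cosh(½(ℓ+1)λ). -/

import Mathlib

open Polynomial

lemma U_eval_sinh (s lam : ℝ) (hlam : 0 < lam) (hcosh : Real.cosh lam = s / 2) :
    ∀ n : ℤ, (Polynomial.Chebyshev.U ℝ n).eval (s / 2)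
      = Real.sinh (((n : ℝ) + 1) * lam) / Real.sinh lam := by
  have hsh : Real.sinh lam ≠ 0 := ne_of_gt (Real.sinh_pos_iff.2 hlam)
  have hrec : ∀ a : ℝ, Real.sinh (a + lam) = s * Real.sinh a - Real.sinh (a - lam) := by
    intro a
    linear_combination Real.sinh_add a lam + Real.sinh_sub a lam + 2 * Real.sinh a * hcosh
  have key : ∀ n : ℤ, (Polynomial.Chebyshev.U ℝ n).eval (s / 2)
      = Real.sinh (((n : ℝ) + 1) * lam) / Real.sinh lam ∧
      (Polynomial.Chebyshev.U ℝ (n + 1)).eval (s / 2)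
      = Real.sinh (((n : ℝ) + 2) * lam) / Real.sinh lam := by
    intro n
    induction n using Int.induction_on with
    | zero =>
      constructor
      · simp [Polynomial.Chebyshev.U_zero, one_mul, div_self hsh]
      · rw [zero_add, Polynomial.Chebyshev.U_one]
        have h := hrec lam
        simp only [Polynomial.eval_mul, Polynomial.eval_ofNat, Polynomial.eval_X]
        push_cast
        ring_nf at h ⊢
        simp only [Real.sinh_zero, sub_zero] at h
        rw [h]
        field_simp
    | succ k ih =>
      obtain ⟨ih1, ih2⟩ := ih
      constructor
      · rw [ih2]; push_cast; ring_nf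
      · have hU := Polynomial.Chebyshev.U_add_two ℝ k
        rw [show ((k : ℤ) + 1 + 1) = (k : ℤ) + 2 by ring, hU]
        simp only [Polynomial.eval_sub, Polynomial.eval_mul, Polynomial.eval_ofNat,
          Polynomial.eval_X]
        rw [ih1, ih2]
        have h := hrec (((k : ℝ) + 2) * lam)
        push_cast
        ring_nf at h ⊢
        linear_combination -(Real.sinh lam)⁻¹ * h
    | pred k ih =>
      obtain ⟨ih1, ih2⟩ := ih
      constructor
      · have hU := Polynomial.Chebyshev.U_sub_one ℝ (-(k:ℤ))
        rw [hU]
        simp only [Polynomial.eval_sub, Polynomial.eval_mul, Polynomial.eval_ofNat,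
          Polynomial.eval_X]
        rw [ih1, ih2]
        have h := hrec (-((k : ℝ) * lam) + lam)
        push_cast
        ring_nf at h ⊢
        linear_combination -(Real.sinh lam)⁻¹ * h
      · rw [show (-(k:ℤ) - 1 + 1 : ℤ) = -(k:ℤ) by ring]
        rw [ih1]
        push_cast
        ring_nf
  intro n
  exact (key n).1

lemma disc_max_principle (s : ℝ) (hs : 2 < s) (ℓ : ℤ) (hℓ : 1 ≤ ℓ) (D : ℤ → ℝ)
    (h0 : D 0 = 0) (hL : D (ℓ + 1) = 0)
    (hrec : ∀ i ∈ Finset.Icc 1 ℓ, -D (i + 1) + s * D i - D (i - 1) = 0) :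
    ∀ i ∈ Finset.Icc 0 (ℓ + 1), D i ≤ 0 := by
  have hne : (Finset.Icc (0:ℤ) (ℓ+1)).Nonempty := by
    refine ⟨0, ?_⟩; simp [Finset.mem_Icc]; omega
  obtain ⟨i, hi, hmax⟩ := Finset.exists_max_image _ D hne
  by_cases hDi : D i ≤ 0
  · intro j hj; exact le_trans (hmax j hj) hDi
  · exfalso
    push_neg at hDi
    simp only [Finset.mem_Icc] at hi
    have hi0 : i ≠ 0 := by rintro rfl; rw [h0] at hDi; exact lt_irrefl _ hDi
    have hiL : i ≠ ℓ + 1 := by rintro rfl; rw [hL] at hDi; exact lt_irrefl _ hDi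
    have hi' : i ∈ Finset.Icc 1 ℓ := by simp [Finset.mem_Icc]; omega
    have h1 := hrec i hi'
    have ha := hmax (i + 1) (by simp [Finset.mem_Icc] at hi' ⊢; omega)
    have hb := hmax (i - 1) (by simp [Finset.mem_Icc] at hi' ⊢; omega)
    nlinarith

lemma green_identity (s lam : ℝ) (hlam : 0 < lam)
    (hcosh : Real.cosh lam = s / 2) (ℓ : ℤ) (hℓ : 1 ≤ ℓ)
    (g : ℤ → ℤ → ℝ)
    (hg : ∀ i j : ℤ, g i j =
      (Polynomial.Chebyshev.U ℝ (min i j - 1)).eval (s / 2) *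
        (Polynomial.Chebyshev.U ℝ (ℓ - max i j)).eval (s / 2) /
        (Polynomial.Chebyshev.U ℝ ℓ).eval (s / 2))
    (i j : ℤ) (hi : i ∈ Finset.Icc 1 ℓ) (hj : j ∈ Finset.Icc 1 ℓ) :
    -g (i + 1) j + s * g i j - g (i - 1) j = if j = i then 1 else 0 := by
  simp only [Finset.mem_Icc] at hi hj
  have hU := U_eval_sinh s lam hlam hcosh
  have hsh : Real.sinh lam ≠ 0 := ne_of_gt (Real.sinh_pos_iff.2 hlam)
  have hshL : (0:ℝ) < Real.sinh (((ℓ:ℝ) + 1) * lam) := by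
    apply Real.sinh_pos_iff.2
    have h1 : (1:ℝ) ≤ (ℓ:ℝ) := by exact_mod_cast hℓ
    nlinarith
  have hshL' : Real.sinh (((ℓ:ℝ) + 1) * lam) ≠ 0 := ne_of_gt hshL
  have hrec : ∀ a : ℝ, Real.sinh (a + lam) = s * Real.sinh a - Real.sinh (a - lam) := by
    intro a
    linear_combination Real.sinh_add a lam + Real.sinh_sub a lam + 2 * Real.sinh a * hcosh
  rcases lt_trichotomy j i with hji | rfl | hij
  · -- j < i
    rw [if_neg (by omega)]
    rw [hg (i+1) j, hg i j, hg (i-1) j]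
    rw [min_eq_right (by omega : j ≤ i + 1), max_eq_left (by omega : j ≤ i + 1),
        min_eq_right (by omega : j ≤ i), max_eq_left (by omega : j ≤ i),
        min_eq_right (by omega : j ≤ i - 1), max_eq_left (by omega : j ≤ i - 1)]
    rw [show (Polynomial.Chebyshev.U ℝ (j-1)).eval (s/2)
        = Real.sinh ((j:ℝ)*lam)/Real.sinh lam by rw [hU]; push_cast; ring_nf]
    rw [show (Polynomial.Chebyshev.U ℝ (ℓ-(i+1))).eval (s/2)
        = Real.sinh (((ℓ:ℝ)+1-(i:ℝ))*lam - lam)/Real.sinh lam by rw [hU]; push_cast; ring_nf]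
    rw [show (Polynomial.Chebyshev.U ℝ (ℓ-i)).eval (s/2)
        = Real.sinh (((ℓ:ℝ)+1-(i:ℝ))*lam)/Real.sinh lam by rw [hU]; push_cast; ring_nf]
    rw [show (Polynomial.Chebyshev.U ℝ (ℓ-(i-1))).eval (s/2)
        = Real.sinh (((ℓ:ℝ)+1-(i:ℝ))*lam + lam)/Real.sinh lam by rw [hU]; push_cast; ring_nf]
    rw [hU ℓ]
    have h := hrec (((ℓ:ℝ)+1-(i:ℝ))*lam)
    field_simp
    linear_combination (norm := ring_nf) (-Real.sinh ((j:ℝ)*lam)) * h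
  · -- diagonal
    rw [if_pos rfl]
    rw [hg (j+1) j, hg j j, hg (j-1) j]
    rw [min_eq_right (by omega : j ≤ j + 1), max_eq_left (by omega : j ≤ j + 1),
        min_self, max_self,
        min_eq_left (by omega : j - 1 ≤ j), max_eq_right (by omega : j - 1 ≤ j)]
    rw [show (Polynomial.Chebyshev.U ℝ (j-1)).eval (s/2)
        = Real.sinh ((j:ℝ)*lam)/Real.sinh lam by rw [hU]; push_cast; ring_nf]
    rw [show (Polynomial.Chebyshev.U ℝ (j-1-1)).eval (s/2)
        = Real.sinh ((j:ℝ)*lam - lam)/Real.sinh lam by rw [hU]; push_cast; ring_nf]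
    rw [show (Polynomial.Chebyshev.U ℝ (ℓ-(j+1))).eval (s/2)
        = Real.sinh (((ℓ:ℝ)+1-(j:ℝ))*lam - lam)/Real.sinh lam by rw [hU]; push_cast; ring_nf]
    rw [show (Polynomial.Chebyshev.U ℝ (ℓ-j)).eval (s/2)
        = Real.sinh (((ℓ:ℝ)+1-(j:ℝ))*lam)/Real.sinh lam by rw [hU]; push_cast; ring_nf]
    rw [hU ℓ]
    have hdiag : -(Real.sinh ((j:ℝ)*lam) * Real.sinh ((((ℓ:ℝ)+1-(j:ℝ))*lam) - lam))
        + s * (Real.sinh ((j:ℝ)*lam) * Real.sinh (((ℓ:ℝ)+1-(j:ℝ))*lam))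
        - Real.sinh ((j:ℝ)*lam - lam) * Real.sinh (((ℓ:ℝ)+1-(j:ℝ))*lam)
        = Real.sinh lam * Real.sinh (((ℓ:ℝ)+1)*lam) := by
      have e : Real.sinh (((ℓ:ℝ)+1)*lam)
          = Real.sinh ((j:ℝ)*lam + ((ℓ:ℝ)+1-(j:ℝ))*lam) := by ring_nf
      rw [e, Real.sinh_sub, Real.sinh_sub, Real.sinh_add]
      linear_combination (-2 * Real.sinh ((j:ℝ)*lam) * Real.sinh (((ℓ:ℝ)+1-(j:ℝ))*lam)) * hcosh
    field_simp
    linear_combination (norm := ring_nf) hdiag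
  · -- i < j
    rw [if_neg (by omega)]
    rw [hg (i+1) j, hg i j, hg (i-1) j]
    rw [min_eq_left (by omega : i + 1 ≤ j), max_eq_right (by omega : i + 1 ≤ j),
        min_eq_left (by omega : i ≤ j), max_eq_right (by omega : i ≤ j),
        min_eq_left (by omega : i - 1 ≤ j), max_eq_right (by omega : i - 1 ≤ j)]
    rw [show (Polynomial.Chebyshev.U ℝ (i+1-1)).eval (s/2)
        = Real.sinh ((i:ℝ)*lam + lam)/Real.sinh lam by rw [hU]; push_cast; ring_nf]
    rw [show (Polynomial.Chebyshev.U ℝ (i-1)).eval (s/2)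
        = Real.sinh ((i:ℝ)*lam)/Real.sinh lam by rw [hU]; push_cast; ring_nf]
    rw [show (Polynomial.Chebyshev.U ℝ (i-1-1)).eval (s/2)
        = Real.sinh ((i:ℝ)*lam - lam)/Real.sinh lam by rw [hU]; push_cast; ring_nf]
    rw [show (Polynomial.Chebyshev.U ℝ (ℓ-j)).eval (s/2)
        = Real.sinh (((ℓ:ℝ)+1-(j:ℝ))*lam)/Real.sinh lam by rw [hU]; push_cast; ring_nf]
    rw [hU ℓ]
    have h := hrec ((i:ℝ)*lam)
    field_simp
    linear_combination (norm := ring_nf) (-Real.sinh (((ℓ:ℝ)+1-(j:ℝ))*lam)) * h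


set_option maxHeartbeats 1000000 in
/-- A symbol block determines the orbit up to an exponentially small error:
if `x : {0,…,ℓ+1} → [0,1)` satisfies the cat map recurrence on `{1,…,ℓ}` and
`x̄_i = Σ_{j=1}^{ℓ} g_{ij} m_j` is the approximate state, then
`|x_i − x̄_i| ≤ cosh((½(ℓ+1) − i)λ)/cosh(½(ℓ+1)λ)` for `i ∈ {1,…,ℓ}`,
where `cosh λ = s/2`. -/
theorem cat_block_shadowing_bound (s lam : ℝ) (hs : 2 < s) (hlam : 0 < lam)
    (hcosh : Real.cosh lam = s / 2) (ℓ : ℤ) (hℓ : 1 ≤ ℓ)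
    (g : ℤ → ℤ → ℝ)
    (hg : ∀ i j : ℤ, g i j =
      (Polynomial.Chebyshev.U ℝ (min i j - 1)).eval (s / 2) *
        (Polynomial.Chebyshev.U ℝ (ℓ - max i j)).eval (s / 2) /
        (Polynomial.Chebyshev.U ℝ ℓ).eval (s / 2))
    (x m : ℤ → ℝ)
    (hrange : ∀ t ∈ Finset.Icc 0 (ℓ + 1), 0 ≤ x t ∧ x t < 1)
    (hx : ∀ t ∈ Finset.Icc 1 ℓ, -x (t + 1) + s * x t - x (t - 1) = m t) :
    ∀ i ∈ Finset.Icc 1 ℓ,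
      |x i - ∑ j ∈ Finset.Icc 1 ℓ, g i j * m j| ≤
        Real.cosh ((((ℓ : ℝ) + 1) / 2 - (i : ℝ)) * lam) /
          Real.cosh ((((ℓ : ℝ) + 1) / 2) * lam) := by
  have hU := U_eval_sinh s lam hlam hcosh
  have hsh : (0:ℝ) < Real.sinh lam := Real.sinh_pos_iff.2 hlam
  have hl1 : (1:ℝ) ≤ (ℓ:ℝ) := by exact_mod_cast hℓ
  have hshL : (0:ℝ) < Real.sinh (((ℓ:ℝ) + 1) * lam) := by
    apply Real.sinh_pos_iff.2; nlinarith
  set F : ℤ → ℝ := fun a => ∑ j ∈ Finset.Icc 1 ℓ, g a j * m j with hF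
  have hF0 : F 0 = 0 := by
    apply Finset.sum_eq_zero
    intro j hj
    simp only [Finset.mem_Icc] at hj
    rw [hg, min_eq_left (by omega : (0:ℤ) ≤ j)]
    norm_num [Polynomial.Chebyshev.U_neg_one]
  have hFL : F (ℓ+1) = 0 := by
    apply Finset.sum_eq_zero
    intro j hj
    simp only [Finset.mem_Icc] at hj
    rw [hg, max_eq_left (by omega : j ≤ ℓ+1), show ℓ - (ℓ+1) = -1 by ring]
    norm_num [Polynomial.Chebyshev.U_neg_one]
  have hFrec : ∀ i ∈ Finset.Icc 1 ℓ, -F (i+1) + s * F i - F (i-1) = m i := by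
    intro i hi
    have split : ∑ j ∈ Finset.Icc 1 ℓ, (-g (i+1) j + s * g i j - g (i-1) j) * m j
        = -F (i+1) + s * F i - F (i-1) := by
      simp only [hF, Finset.mul_sum, ← Finset.sum_neg_distrib, ← Finset.sum_sub_distrib,
        ← Finset.sum_add_distrib]
      apply Finset.sum_congr rfl
      intro j _
      ring
    rw [← split]
    rw [Finset.sum_congr rfl
      (fun j hj => by rw [green_identity s lam hlam hcosh ℓ hℓ g hg i j hi hj])]
    simp only [ite_mul, one_mul, zero_mul]
    rw [Finset.sum_ite_eq' (Finset.Icc 1 ℓ) i m, if_pos hi]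
  set D : ℤ → ℝ := fun a => x a - F a -
      (x 0 * Real.sinh (((ℓ:ℝ)+1-(a:ℝ))*lam) + x (ℓ+1) * Real.sinh ((a:ℝ)*lam))
        / Real.sinh (((ℓ:ℝ)+1)*lam) with hD
  have hD0 : D 0 = 0 := by
    simp only [hD, hF0]
    push_cast
    rw [show ((ℓ:ℝ)+1-0)*lam = ((ℓ:ℝ)+1)*lam by ring]
    simp [Real.sinh_zero]
    field_simp
    ring
  have hDL : D (ℓ+1) = 0 := by
    simp only [hD, hFL]
    push_cast
    rw [show ((ℓ:ℝ)+1-((ℓ:ℝ)+1))*lam = 0 by ring]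
    simp [Real.sinh_zero]
    field_simp
    ring
  have hDrec : ∀ i ∈ Finset.Icc 1 ℓ, -D (i+1) + s * D i - D (i-1) = 0 := by
    intro i hi
    have h1 := hx i hi
    have h2 := hFrec i hi
    have hr1 : -Real.sinh (((ℓ:ℝ)+1-((i:ℝ)+1))*lam) + s * Real.sinh (((ℓ:ℝ)+1-(i:ℝ))*lam)
        - Real.sinh (((ℓ:ℝ)+1-((i:ℝ)-1))*lam) = 0 := by
      linear_combination (norm := ring_nf)
        -Real.sinh_add (((ℓ:ℝ)+1-(i:ℝ))*lam) lam - Real.sinh_sub (((ℓ:ℝ)+1-(i:ℝ))*lam) lam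
        - 2 * Real.sinh (((ℓ:ℝ)+1-(i:ℝ))*lam) * hcosh
    have hr2 : -Real.sinh (((i:ℝ)+1)*lam) + s * Real.sinh ((i:ℝ)*lam)
        - Real.sinh (((i:ℝ)-1)*lam) = 0 := by
      linear_combination (norm := ring_nf)
        -Real.sinh_add ((i:ℝ)*lam) lam - Real.sinh_sub ((i:ℝ)*lam) lam
        - 2 * Real.sinh ((i:ℝ)*lam) * hcosh
    simp only [hD]
    push_cast
    linear_combination h1 - h2 - (x 0 / Real.sinh (((ℓ:ℝ)+1)*lam)) * hr1
      - (x (ℓ+1) / Real.sinh (((ℓ:ℝ)+1)*lam)) * hr2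
  have hDzero : ∀ a ∈ Finset.Icc 0 (ℓ+1), D a = 0 := by
    intro a ha
    have h1 := disc_max_principle s hs ℓ hℓ D hD0 hDL hDrec a ha
    have h2 := disc_max_principle s hs ℓ hℓ (fun b => -D b) (by simp [hD0]) (by simp [hDL])
      (fun i hi => by have := hDrec i hi; linarith) a ha
    linarith
  intro i hi
  have hii := hi
  simp only [Finset.mem_Icc] at hii
  have hDi := hDzero i (by simp only [Finset.mem_Icc]; omega)
  simp only [hD] at hDi
  have hFi : (∑ j ∈ Finset.Icc 1 ℓ, g i j * m j) = F i := by rw [hF]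
  rw [hFi]
  have hxF : x i - F i = (x 0 * Real.sinh (((ℓ:ℝ)+1-(i:ℝ))*lam)
      + x (ℓ+1) * Real.sinh ((i:ℝ)*lam)) / Real.sinh (((ℓ:ℝ)+1)*lam) := by linarith
  rw [hxF]
  -- bound
  set u : ℝ := (((ℓ:ℝ)+1)/2)*lam with hu
  set v : ℝ := ((((ℓ:ℝ)+1)/2) - (i:ℝ))*lam with hv
  have hi1 : (1:ℝ) ≤ (i:ℝ) := by exact_mod_cast hii.1
  have hi2 : (i:ℝ) ≤ (ℓ:ℝ) := by exact_mod_cast hii.2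
  have euv1 : ((ℓ:ℝ)+1-(i:ℝ))*lam = u + v := by rw [hu, hv]; ring
  have euv2 : ((i:ℝ))*lam = u - v := by rw [hu, hv]; ring
  have euv3 : ((ℓ:ℝ)+1)*lam = u + u := by rw [hu]; ring
  rw [euv1, euv2, euv3]
  have h1 : 0 < u + v := by rw [← euv1]; nlinarith
  have h2 : 0 < u - v := by rw [← euv2]; nlinarith
  have h3 : 0 < u := by rw [hu]; nlinarith
  have hs1 : 0 ≤ Real.sinh (u + v) := le_of_lt (Real.sinh_pos_iff.2 h1)
  have hs2 : 0 ≤ Real.sinh (u - v) := le_of_lt (Real.sinh_pos_iff.2 h2)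
  have hs3 : 0 < Real.sinh (u + u) := Real.sinh_pos_iff.2 (by linarith)
  have hsu : 0 < Real.sinh u := Real.sinh_pos_iff.2 h3
  have hcu : 0 < Real.cosh u := Real.cosh_pos u
  obtain ⟨hx00, hx01⟩ := hrange 0 (by simp only [Finset.mem_Icc]; omega)
  obtain ⟨hxL0, hxL1⟩ := hrange (ℓ+1) (by simp only [Finset.mem_Icc]; omega)
  rw [abs_of_nonneg (by positivity)]
  calc (x 0 * Real.sinh (u + v) + x (ℓ+1) * Real.sinh (u - v)) / Real.sinh (u + u)
      ≤ (Real.sinh (u + v) + Real.sinh (u - v)) / Real.sinh (u + u) := by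
        apply (div_le_div_iff_of_pos_right hs3).2
        nlinarith [hs1, hs2, hx01, hxL1, hx00, hxL0]
    _ = Real.cosh v / Real.cosh u := by
        rw [Real.sinh_add u v, Real.sinh_sub u v, Real.sinh_add u u]
        field_simp
        ring
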